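/- For p, q > 1 and r, s ∈ (0,1), one has arsinh_{p,q}(r)·arsinh_{p,q}(s) ≤ √(arsinh_{p,q}(r²)·arsinh_{p,q}(s²)) ≤ arsinh_{p,q}(r·s). -/

import Mathlib

open Real Set MeasureTheory intervalIntegral Topology Filter

noncomputable def arsinhpq (p q x : ℝ) : ℝ :=
  ∫ t in (0:ℝ)..x, (1 + t ^ q) ^ (-1/p)

namespace Stmt10Aux

noncomputable def fQ (p q t : ℝ) : ℝ := (1 + t ^ q) ^ (-1/p)

lemma arsinhpq_eq (p q x : ℝ) : arsinhpq p q x = ∫ t in (0:ℝ)..x, fQ p q t := rfl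

variable {p q : ℝ}

lemma base_pos (hq : 0 < q) {t : ℝ} (ht : 0 ≤ t) : (0:ℝ) < 1 + t ^ q := by
  have := Real.rpow_nonneg ht q
  linarith

lemma exp_nonpos (hp : 0 < p) : -1/p ≤ 0 := by
  rw [neg_div]
  have : 0 < 1/p := by positivity
  linarith

lemma fQ_pos (hq : 0 < q) {t : ℝ} (ht : 0 ≤ t) : 0 < fQ p q t :=
  Real.rpow_pos_of_pos (base_pos hq ht) _

lemma fQ_le_one (hp : 0 < p) (hq : 0 < q) {t : ℝ} (ht : 0 ≤ t) : fQ p q t ≤ 1 := by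
  apply Real.rpow_le_one_of_one_le_of_nonpos
  · have := Real.rpow_nonneg ht q; linarith
  · exact exp_nonpos hp

lemma fQ_anti (hp : 0 < p) (hq : 0 < q) {a b : ℝ} (ha : 0 ≤ a) (hab : a ≤ b) :
    fQ p q b ≤ fQ p q a := by
  apply Real.rpow_le_rpow_of_nonpos (base_pos hq ha) _ (exp_nonpos hp)
  have := Real.rpow_le_rpow ha hab hq.le
  linarith

lemma fQ_contAt (hq : 0 < q) {t : ℝ} (ht : 0 ≤ t) : ContinuousAt (fQ p q) t := by
  have h1 : ContinuousAt (fun t : ℝ => 1 + t ^ q) t :=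
    continuousAt_const.add (Real.continuousAt_rpow_const t q (Or.inr hq.le))
  exact h1.rpow_const (Or.inl (base_pos hq ht).ne')

lemma fQ_intble (hq : 0 < q) {a b : ℝ} (ha : 0 ≤ a) (hab : a ≤ b) :
    IntervalIntegrable (fQ p q) volume a b := by
  apply ContinuousOn.intervalIntegrable
  intro t ht
  rw [uIcc_of_le hab] at ht
  exact (fQ_contAt hq (ha.trans ht.1)).continuousWithinAt

lemma fQ_comp_intble (hq : 0 < q) {c a b : ℝ} (hc : 0 ≤ c) (ha : 0 ≤ a) (hab : a ≤ b) :
    IntervalIntegrable (fun t => fQ p q (c * t)) volume a b := by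
  apply ContinuousOn.intervalIntegrable
  intro t ht
  rw [uIcc_of_le hab] at ht
  have : ContinuousAt (fun t => fQ p q (c * t)) t :=
    (fQ_contAt hq (mul_nonneg hc (ha.trans ht.1))).comp (continuousAt_const.mul continuousAt_id)
  exact this.continuousWithinAt

lemma F_pos (hq : 0 < q) {x : ℝ} (hx : 0 < x) : 0 < arsinhpq p q x := by
  rw [arsinhpq_eq]
  exact intervalIntegral.intervalIntegral_pos_of_pos_on (fQ_intble hq le_rfl hx.le)
    (fun t ht => fQ_pos hq ht.1.le) hx

lemma F_le (hp : 0 < p) (hq : 0 < q) {x : ℝ} (hx : 0 ≤ x) : arsinhpq p q x ≤ x := by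
  rw [arsinhpq_eq]
  calc (∫ t in (0:ℝ)..x, fQ p q t) ≤ ∫ _t in (0:ℝ)..x, (1:ℝ) :=
        intervalIntegral.integral_mono_on hx (fQ_intble hq le_rfl hx)
          intervalIntegrable_const (fun t ht => fQ_le_one hp hq ht.1)
    _ = x := by simp

lemma F_scale (hq : 0 < q) {c x : ℝ} (hc : 0 < c) (hx : 0 ≤ x) :
    arsinhpq p q (c * x) = c * ∫ t in (0:ℝ)..x, fQ p q (c * t) := by
  rw [arsinhpq_eq]
  have h := intervalIntegral.smul_integral_comp_mul_left (f := fQ p q) (a := 0) (b := x) c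
  rw [mul_zero] at h
  rw [← h]
  simp [smul_eq_mul]

lemma key_pointwise (hp : 1 < p) (hq : 1 < q) {a b v : ℝ} (ha : 0 < a) (hab : a ≤ b)
    (hv : 0 ≤ v) (hv1 : v ≤ 1) :
    fQ p q b * fQ p q (a * v) ≤ fQ p q a * fQ p q (b * v) := by
  have hp0 : 0 < p := lt_trans one_pos hp
  have hq0 : 0 < q := lt_trans one_pos hq
  have hb : 0 < b := lt_of_lt_of_le ha hab
  unfold fQ
  rw [← Real.mul_rpow (base_pos hq0 hb.le).le (base_pos hq0 (mul_nonneg ha.le hv)).le,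
    ← Real.mul_rpow (base_pos hq0 ha.le).le (base_pos hq0 (mul_nonneg hb.le hv)).le]
  apply Real.rpow_le_rpow_of_nonpos
  · exact mul_pos (base_pos hq0 ha.le) (base_pos hq0 (mul_nonneg hb.le hv))
  · have hav : (a * v) ^ q = a ^ q * v ^ q := Real.mul_rpow ha.le hv
    have hbv : (b * v) ^ q = b ^ q * v ^ q := Real.mul_rpow hb.le hv
    have h1 : a ^ q ≤ b ^ q := Real.rpow_le_rpow ha.le hab hq0.le
    have h2 : v ^ q ≤ 1 := Real.rpow_le_one hv hv1 hq0.le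
    rw [hav, hbv]
    nlinarith [mul_nonneg (sub_nonneg.2 h1) (sub_nonneg.2 h2)]
  · exact exp_nonpos hp0

lemma T_anti (hp : 1 < p) (hq : 1 < q) {a b : ℝ} (ha : 0 < a) (hab : a ≤ b) :
    b * fQ p q b * arsinhpq p q a ≤ a * fQ p q a * arsinhpq p q b := by
  have hq0 : 0 < q := lt_trans one_pos hq
  have hb : 0 < b := lt_of_lt_of_le ha hab
  have Fa : arsinhpq p q a = a * ∫ v in (0:ℝ)..1, fQ p q (a * v) := by
    simpa using F_scale (p := p) hq0 ha (zero_le_one)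
  have Fb : arsinhpq p q b = b * ∫ v in (0:ℝ)..1, fQ p q (b * v) := by
    simpa using F_scale (p := p) hq0 hb (zero_le_one)
  rw [Fa, Fb]
  set Ia := ∫ v in (0:ℝ)..1, fQ p q (a * v) with hIa
  set Ib := ∫ v in (0:ℝ)..1, fQ p q (b * v) with hIb
  have h : fQ p q b * Ia ≤ fQ p q a * Ib := by
    rw [hIa, hIb, ← intervalIntegral.integral_const_mul, ← intervalIntegral.integral_const_mul]
    apply intervalIntegral.integral_mono_on zero_le_one
      ((fQ_comp_intble hq0 ha.le le_rfl zero_le_one).const_mul _)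
      ((fQ_comp_intble hq0 hb.le le_rfl zero_le_one).const_mul _)
    intro v hv
    exact key_pointwise hp hq ha hab hv.1 hv.2
  have h2 : a * b * (fQ p q b * Ia) ≤ a * b * (fQ p q a * Ib) :=
    mul_le_mul_of_nonneg_left h (by positivity)
  calc b * fQ p q b * (a * Ia) = a * b * (fQ p q b * Ia) := by ring
    _ ≤ a * b * (fQ p q a * Ib) := h2
    _ = a * fQ p q a * (b * Ib) := by ring

lemma F_deriv (hp : 1 < p) (hq : 1 < q) {y : ℝ} (hy : 0 < y) :
    HasDerivAt (arsinhpq p q) (fQ p q y) y := by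
  have hq0 : 0 < q := lt_trans one_pos hq
  have h1 : IntervalIntegrable (fQ p q) volume 0 y := fQ_intble hq0 le_rfl hy.le
  have hcont : ContinuousOn (fQ p q) (Ioi 0) := fun t ht =>
    (fQ_contAt hq0 (le_of_lt ht)).continuousWithinAt
  have h2 : StronglyMeasurableAtFilter (fQ p q) (𝓝 y) volume :=
    ⟨Ioi 0, Ioi_mem_nhds hy, hcont.aestronglyMeasurable measurableSet_Ioi⟩
  exact intervalIntegral.integral_hasDerivAt_right h1 h2 (fQ_contAt hq0 hy.le)

lemma claim1 (hp : 1 < p) (hq : 1 < q) {x : ℝ} (hx0 : 0 < x) (hx1 : x ≤ 1) :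
    arsinhpq p q x ^ 2 ≤ arsinhpq p q (x ^ 2) := by
  have hp0 : 0 < p := lt_trans one_pos hp
  have hq0 : 0 < q := lt_trans one_pos hq
  have hF0 : 0 < arsinhpq p q x := F_pos hq0 hx0
  have hFle : arsinhpq p q x ≤ x := F_le hp0 hq0 hx0.le
  have hmain : x * arsinhpq p q x ≤ arsinhpq p q (x ^ 2) := by
    have hs : arsinhpq p q (x ^ 2) = x * ∫ t in (0:ℝ)..x, fQ p q (x * t) := by
      have := F_scale (p := p) hq0 hx0 hx0.le
      rw [← sq] at this
      exact this
    rw [hs, arsinhpq_eq]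
    apply mul_le_mul_of_nonneg_left _ hx0.le
    apply intervalIntegral.integral_mono_on hx0.le (fQ_intble hq0 le_rfl hx0.le)
      (fQ_comp_intble hq0 hx0.le le_rfl hx0.le)
    intro t ht
    exact fQ_anti hp0 hq0 (mul_nonneg hx0.le ht.1) (mul_le_of_le_one_left ht.1 hx1)
  nlinarith [mul_le_mul_of_nonneg_right hFle hF0.le]

lemma claim2 (hp : 1 < p) (hq : 1 < q) {r s : ℝ} (hr : 0 < r) (hrs : r ≤ s) (hs1 : s < 1) :
    arsinhpq p q (r ^ 2) * arsinhpq p q (s ^ 2) ≤ arsinhpq p q (r * s) ^ 2 := by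
  have hs0 : 0 < s := lt_of_lt_of_le hr hrs
  set c := r * s with hc'
  have hc : 0 < c := mul_pos hr hs0
  set d := s / r with hd'
  have hd1 : 1 ≤ d := (one_le_div hr).2 hrs
  set φ : ℝ → ℝ := fun x => arsinhpq p q (c * x) * arsinhpq p q (c * x⁻¹) with hφ'
  have hderiv : ∀ x : ℝ, 0 < x →
      HasDerivAt φ ((fQ p q (c * x) * c) * arsinhpq p q (c * x⁻¹)
        + arsinhpq p q (c * x) * (fQ p q (c * x⁻¹) * (c * -(x ^ 2)⁻¹))) x := by
    intro x hx
    have h1 : HasDerivAt (fun x : ℝ => c * x) c x := by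
      simpa using (hasDerivAt_id x).const_mul c
    have h2 : HasDerivAt (fun x : ℝ => c * x⁻¹) (c * -(x ^ 2)⁻¹) x :=
      (hasDerivAt_inv hx.ne').const_mul c
    have hF1 : HasDerivAt (fun x : ℝ => arsinhpq p q (c * x)) (fQ p q (c * x) * c) x :=
      (F_deriv hp hq (mul_pos hc hx)).comp x h1
    have hF2 : HasDerivAt (fun x : ℝ => arsinhpq p q (c * x⁻¹))
        (fQ p q (c * x⁻¹) * (c * -(x ^ 2)⁻¹)) x :=
      (F_deriv hp hq (by positivity)).comp x h2
    exact hF1.mul hF2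
  have hanti : AntitoneOn φ (Icc 1 d) := by
    apply antitoneOn_of_deriv_nonpos (convex_Icc 1 d)
    · intro x hx
      exact ((hderiv x (lt_of_lt_of_le one_pos hx.1)).continuousAt).continuousWithinAt
    · intro x hx
      rw [interior_Icc] at hx
      exact ((hderiv x (lt_of_lt_of_le one_pos hx.1.le)).differentiableAt).differentiableWithinAt
    · intro x hx
      rw [interior_Icc] at hx
      have hx0 : (0:ℝ) < x := lt_of_lt_of_le one_pos hx.1.le
      rw [(hderiv x hx0).deriv]
      have hab : c * x⁻¹ ≤ c * x := by
        apply mul_le_mul_of_nonneg_left _ hc.le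
        have h1x : (1:ℝ)/x ≤ 1 := (div_le_one hx0).2 hx.1.le
        rw [one_div] at h1x
        linarith [hx.1.le]
      have hT := T_anti hp hq (a := c * x⁻¹) (b := c * x) (by positivity) hab
      -- hT : (c*x) * fQ(c*x) * F(c*x⁻¹) ≤ (c*x⁻¹) * fQ(c*x⁻¹) * F(c*x)
      have hT2 := mul_le_mul_of_nonneg_right hT (inv_nonneg.2 hx0.le)
      have hxx : x * x⁻¹ = 1 := mul_inv_cancel₀ hx0.ne'
      have e1 : c * x * fQ p q (c * x) * arsinhpq p q (c * x⁻¹) * x⁻¹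
          = c * fQ p q (c * x) * arsinhpq p q (c * x⁻¹) := by
        calc c * x * fQ p q (c * x) * arsinhpq p q (c * x⁻¹) * x⁻¹
            = c * fQ p q (c * x) * arsinhpq p q (c * x⁻¹) * (x * x⁻¹) := by ring
          _ = c * fQ p q (c * x) * arsinhpq p q (c * x⁻¹) := by rw [hxx, mul_one]
      have e2 : c * x⁻¹ * fQ p q (c * x⁻¹) * arsinhpq p q (c * x) * x⁻¹
          = c * (x ^ 2)⁻¹ * fQ p q (c * x⁻¹) * arsinhpq p q (c * x) := by
        rw [sq, mul_inv]
        ring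
      rw [e1, e2] at hT2
      nlinarith [hT2]
  have hres := hanti (left_mem_Icc.2 hd1) (right_mem_Icc.2 hd1) hd1
  -- hres : φ d ≤ φ 1
  have h1 : φ 1 = arsinhpq p q c ^ 2 := by
    simp [hφ', sq]
  have h2 : φ d = arsinhpq p q (s ^ 2) * arsinhpq p q (r ^ 2) := by
    have hcd : c * d = s ^ 2 := by
      rw [hc', hd']; field_simp
    have hcd' : c * d⁻¹ = r ^ 2 := by
      rw [hc', hd', inv_div]
      field_simp
    show arsinhpq p q (c * d) * arsinhpq p q (c * d⁻¹)
        = arsinhpq p q (s ^ 2) * arsinhpq p q (r ^ 2)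
    rw [hcd, hcd']
  rw [h1, h2] at hres
  linarith [hres]

end Stmt10Aux

open Stmt10Aux in
theorem stmt10 (p q r s : ℝ) (hp : 1 < p) (hq : 1 < q)
    (hr : r ∈ Ioo (0:ℝ) 1) (hs : s ∈ Ioo (0:ℝ) 1) :
    arsinhpq p q r * arsinhpq p q s ≤ Real.sqrt (arsinhpq p q (r ^ 2) * arsinhpq p q (s ^ 2)) ∧
      Real.sqrt (arsinhpq p q (r ^ 2) * arsinhpq p q (s ^ 2)) ≤ arsinhpq p q (r * s) := by
  obtain ⟨hr0, hr1⟩ := hr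
  obtain ⟨hs0, hs1⟩ := hs
  have hq0 : 0 < q := lt_trans one_pos hq
  have hFr : 0 < arsinhpq p q r := F_pos hq0 hr0
  have hFs : 0 < arsinhpq p q s := F_pos hq0 hs0
  have hFrs : 0 < arsinhpq p q (r * s) := F_pos hq0 (mul_pos hr0 hs0)
  have hc2 : arsinhpq p q (r ^ 2) * arsinhpq p q (s ^ 2) ≤ arsinhpq p q (r * s) ^ 2 := by
    rcases le_total r s with h | h
    · exact claim2 hp hq hr0 h hs1
    · have := claim2 hp hq hs0 h hr1
      rw [mul_comm (arsinhpq p q (s ^ 2)), mul_comm s r] at this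
      exact this
  constructor
  · rw [Real.le_sqrt (by positivity)
      (mul_nonneg (F_pos hq0 (by positivity : (0:ℝ) < r ^ 2)).le
        (F_pos hq0 (by positivity : (0:ℝ) < s ^ 2)).le)]
    have h1 := claim1 hp hq hr0 hr1.le
    have h2 := claim1 hp hq hs0 hs1.le
    calc (arsinhpq p q r * arsinhpq p q s) ^ 2
        = arsinhpq p q r ^ 2 * arsinhpq p q s ^ 2 := by ring
      _ ≤ arsinhpq p q (r ^ 2) * arsinhpq p q (s ^ 2) :=
          mul_le_mul h1 h2 (by positivity) (F_pos hq0 (by positivity : (0:ℝ) < r ^ 2)).le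
  · calc Real.sqrt (arsinhpq p q (r ^ 2) * arsinhpq p q (s ^ 2))
        ≤ Real.sqrt (arsinhpq p q (r * s) ^ 2) := Real.sqrt_le_sqrt hc2
      _ = arsinhpq p q (r * s) := Real.sqrt_sq hFrs.le
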